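/- arXiv:1503.00803 — 5 statements merged into one kernel-verified Lean document; each statement's English description precedes it below -/
import Mathlib

section
/- Let a ≥ 3 be an integer, α = (a + √(a²−4))/2, β = (a − √(a²−4))/2, and G_k = (α^k − β^k)/(α − β). Then for every k ≥ 1, 1/G_k³ = (α − β)³·[ 1/α^{3k} + 3/α^{5k} + 6/α^{7k} + (10α^{4k} − 15α^{2k} + 6)/(α^{7k}(α^{2k} − 1)³) ]. -/
lemma key_aux (A : ℝ) (hA : 1 < A) :
    (1 : ℝ) / (A - A⁻¹) ^ 3 =
      1 / A ^ 3 + 3 / A ^ 5 + 6 / A ^ 7 +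
        (10 * A ^ 4 - 15 * A ^ 2 + 6) / (A ^ 7 * (A ^ 2 - 1) ^ 3) := by
  have hA0 : A ≠ 0 := by positivity
  have h2 : A ^ 2 - 1 ≠ 0 := by nlinarith
  have hAk : A - A⁻¹ ≠ 0 := by
    have h1 : A⁻¹ < 1 := inv_lt_one_of_one_lt₀ hA
    intro h; nlinarith
  have hrw : A - A⁻¹ = (A ^ 2 - 1) / A := by field_simp
  rw [hrw, div_pow, one_div_div]
  field_simp
  ring

theorem stmt_1 (a : ℤ) (ha : 3 ≤ a) (α β : ℝ)
    (hα : α = ((a : ℝ) + Real.sqrt ((a : ℝ) ^ 2 - 4)) / 2)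
    (hβ : β = ((a : ℝ) - Real.sqrt ((a : ℝ) ^ 2 - 4)) / 2)
    (G : ℕ → ℝ) (hG : ∀ k : ℕ, G k = (α ^ k - β ^ k) / (α - β)) :
    ∀ k : ℕ, 1 ≤ k →
      1 / (G k) ^ 3 =
        (α - β) ^ 3 *
          (1 / α ^ (3 * k) + 3 / α ^ (5 * k) + 6 / α ^ (7 * k) +
            (10 * α ^ (4 * k) - 15 * α ^ (2 * k) + 6) /
              (α ^ (7 * k) * (α ^ (2 * k) - 1) ^ 3)) := by
  have ha3 : (3 : ℝ) ≤ (a : ℝ) := by exact_mod_cast ha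
  have h4 : (0 : ℝ) ≤ (a : ℝ) ^ 2 - 4 := by nlinarith
  have hs : Real.sqrt ((a : ℝ) ^ 2 - 4) ^ 2 = (a : ℝ) ^ 2 - 4 := Real.sq_sqrt h4
  have hsnn : 0 ≤ Real.sqrt ((a : ℝ) ^ 2 - 4) := Real.sqrt_nonneg _
  have hα1 : 1 < α := by rw [hα]; nlinarith
  have hmul : α * β = 1 := by rw [hα, hβ]; nlinarith
  have hα0 : α ≠ 0 := by positivity
  have hβinv : β = α⁻¹ := by field_simp at hmul ⊢; linarith [hmul]
  have hβlt : β < 1 := by rw [hβinv]; exact inv_lt_one_of_one_lt₀ hα1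
  have hsub : (0:ℝ) < α - β := by linarith [lt_trans hβlt hα1]
  intro k hk
  have hA : 1 < α ^ k := one_lt_pow₀ hα1 (by omega)
  have e3 : α ^ (3 * k) = (α ^ k) ^ 3 := by rw [← pow_mul, mul_comm]
  have e5 : α ^ (5 * k) = (α ^ k) ^ 5 := by rw [← pow_mul, mul_comm]
  have e7 : α ^ (7 * k) = (α ^ k) ^ 7 := by rw [← pow_mul, mul_comm]
  have e4 : α ^ (4 * k) = (α ^ k) ^ 4 := by rw [← pow_mul, mul_comm]
  have e2 : α ^ (2 * k) = (α ^ k) ^ 2 := by rw [← pow_mul, mul_comm]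
  rw [hG k, hβinv, inv_pow, e3, e5, e7, e4, e2, ← key_aux (α ^ k) hA]
  rw [div_pow, one_div_div, mul_one_div]
end

section
/- Let a ≥ 3 be an integer and α = (a + √(a²−4))/2. Then for every integer k ≥ 2, 10/α^{9k} < (10α^{4k} − 15α^{2k} + 6)/(α^{7k}(α^{2k} − 1)³) < 11/α^{9k}. -/
theorem stmt_2 (a : ℤ) (ha : 3 ≤ a) (α : ℝ)
    (hα : α = ((a : ℝ) + Real.sqrt ((a : ℝ) ^ 2 - 4)) / 2) :
    ∀ k : ℕ, 2 ≤ k →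
      10 / α ^ (9 * k) <
        (10 * α ^ (4 * k) - 15 * α ^ (2 * k) + 6) /
          (α ^ (7 * k) * (α ^ (2 * k) - 1) ^ 3) ∧
      (10 * α ^ (4 * k) - 15 * α ^ (2 * k) + 6) /
          (α ^ (7 * k) * (α ^ (2 * k) - 1) ^ 3) <
        11 / α ^ (9 * k) := by
  have ha3 : (3 : ℝ) ≤ (a : ℝ) := by exact_mod_cast ha
  have hs : (2.2 : ℝ) ≤ Real.sqrt ((a : ℝ) ^ 2 - 4) := by
    have h5 : (5 : ℝ) ≤ (a : ℝ) ^ 2 - 4 := by nlinarith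
    have : (2.2 : ℝ) ≤ Real.sqrt 5 := by
      rw [show (2.2 : ℝ) = Real.sqrt (2.2 ^ 2) from (Real.sqrt_sq (by norm_num)).symm]
      exact Real.sqrt_le_sqrt (by norm_num)
    linarith [Real.sqrt_le_sqrt h5]
  have hα26 : (2.6 : ℝ) ≤ α := by rw [hα]; linarith
  have hα1 : (1 : ℝ) ≤ α := by linarith
  have hα0 : (0 : ℝ) < α := by linarith
  intro k hk
  set t : ℝ := α ^ (2 * k) with htdef
  have ht17 : (17 : ℝ) ≤ t := by
    have h1 : (2.6 : ℝ) ^ 4 ≤ α ^ 4 := by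
      apply pow_le_pow_left₀ (by norm_num) hα26
    have h2 : α ^ 4 ≤ α ^ (2 * k) := by
      apply pow_le_pow_right₀ hα1
      omega
    have : (17 : ℝ) ≤ (2.6 : ℝ) ^ 4 := by norm_num
    linarith
  have ht1 : (1 : ℝ) < t := by linarith
  have h4 : α ^ (4 * k) = t ^ 2 := by
    rw [htdef, ← pow_mul]; ring_nf
  have h9 : α ^ (9 * k) = α ^ (7 * k) * t := by
    rw [htdef, ← pow_add]; ring_nf
  have hp7 : (0 : ℝ) < α ^ (7 * k) := pow_pos hα0 _
  have hcube : (0 : ℝ) < (t - 1) ^ 3 := by nlinarith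
  have hden : (0 : ℝ) < α ^ (7 * k) * (t - 1) ^ 3 := mul_pos hp7 hcube
  have hden9 : (0 : ℝ) < α ^ (9 * k) := pow_pos hα0 _
  constructor
  · rw [div_lt_div_iff₀ hden9 hden, h9, h4]
    have key : 10 * (t - 1) ^ 3 < (10 * t ^ 2 - 15 * t + 6) * t := by nlinarith
    nlinarith [mul_lt_mul_of_pos_left key hp7]
  · rw [div_lt_div_iff₀ hden hden9, h9, h4]
    have key : (10 * t ^ 2 - 15 * t + 6) * t < 11 * (t - 1) ^ 3 := by
      nlinarith [mul_nonneg (by linarith : (0:ℝ) ≤ t - 17) (sq_nonneg (t - 1)),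
        sq_nonneg (t - 17)]
    nlinarith [mul_lt_mul_of_pos_left key hp7]
end

section
/- Let a ≥ 3 be an integer, α = (a + √(a²−4))/2, β = (a − √(a²−4))/2, G_k = (α^k − β^k)/(α − β), and for n ≥ 2 set R_n = ((α³−1)·α^{3n}/α³)·∑_{k=n}^∞ (10α^{4k} − 15α^{2k} + 6)/(α^{7k}(α^{2k}−1)³). Then for every n ≥ 2, ∑_{k=n}^∞ 1/G_k³ = ((α−β)³·α³/(α^{3n}(α³−1)))·[ 1 + (3/α^{2n})·α²(α³−1)/(α⁵−1) + (6α⁴/α^{4n})·(α³−1)/(α⁷−1) + R_n ]. -/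
set_option maxHeartbeats 1600000


theorem stmt_3 (a : ℤ) (ha : 3 ≤ a) (α β : ℝ)
    (hα : α = ((a : ℝ) + Real.sqrt ((a : ℝ) ^ 2 - 4)) / 2)
    (hβ : β = ((a : ℝ) - Real.sqrt ((a : ℝ) ^ 2 - 4)) / 2)
    (G : ℕ → ℝ) (hG : ∀ k : ℕ, G k = (α ^ k - β ^ k) / (α - β)) :
    ∀ n : ℕ, 2 ≤ n →
      ∑' k : ℕ, 1 / (G (n + k)) ^ 3 =
        (α - β) ^ 3 * α ^ 3 / (α ^ (3 * n) * (α ^ 3 - 1)) *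
          (1 + 3 / α ^ (2 * n) * (α ^ 2 * (α ^ 3 - 1) / (α ^ 5 - 1)) +
            6 * α ^ 4 / α ^ (4 * n) * ((α ^ 3 - 1) / (α ^ 7 - 1)) +
            (α ^ 3 - 1) * α ^ (3 * n) / α ^ 3 *
              ∑' k : ℕ,
                (10 * α ^ (4 * (n + k)) - 15 * α ^ (2 * (n + k)) + 6) /
                  (α ^ (7 * (n + k)) * (α ^ (2 * (n + k)) - 1) ^ 3)) := by
  intro n hn
  have ha' : (3:ℝ) ≤ (a:ℝ) := by exact_mod_cast ha
  have h4 : (0:ℝ) ≤ (a:ℝ) ^ 2 - 4 := by nlinarith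
  have hs : Real.sqrt ((a:ℝ) ^ 2 - 4) ^ 2 = (a:ℝ) ^ 2 - 4 := Real.sq_sqrt h4
  have hsnn : (0:ℝ) ≤ Real.sqrt ((a:ℝ) ^ 2 - 4) := Real.sqrt_nonneg _
  have hα32 : (3/2:ℝ) ≤ α := by rw [hα]; linarith
  have hα1 : (1:ℝ) < α := by linarith
  have hα0 : α ≠ 0 := by positivity
  have hβα : β = 1 / α := by
    rw [hβ, eq_div_iff hα0, hα]; nlinarith [hs]
  -- α^m is at least α, so (α^m)^2 ≥ 2 for m ≥ 1
  have hαm : ∀ m : ℕ, 1 ≤ m → 2 ≤ (α ^ m) ^ 2 := by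
    intro m hm
    have h1 : α ^ 1 ≤ α ^ m := pow_le_pow_right₀ hα1.le hm
    rw [pow_one] at h1
    have h2 : (3/2:ℝ) ≤ α ^ m := le_trans hα32 h1
    nlinarith
  -- pure algebraic identity
  have hkey0 : ∀ y : ℝ, y ≠ 0 → y ^ 2 - 1 ≠ 0 →
      y ^ 3 / (y ^ 2 - 1) ^ 3 =
        1 / y ^ 3 + 3 * (1 / y ^ 5) + 6 * (1 / y ^ 7) +
          (10 * y ^ 4 - 15 * y ^ 2 + 6) / (y ^ 7 * (y ^ 2 - 1) ^ 3) := by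
    intro y hy0 hy1
    field_simp
    ring
  have epow : ∀ j m : ℕ, α ^ (j * m) = (α ^ m) ^ j := fun j m => pow_mul' α j m
  have dpow : ∀ j m : ℕ, (1 / α ^ j) ^ m = 1 / (α ^ m) ^ j := by
    intro j m
    rw [div_pow, one_pow, ← pow_mul, pow_mul']
  have hkey : ∀ m : ℕ, 1 ≤ m →
      α ^ (3 * m) / (α ^ (2 * m) - 1) ^ 3 =
        (1 / α ^ 3) ^ m + 3 * (1 / α ^ 5) ^ m + 6 * (1 / α ^ 7) ^ m +
          (10 * α ^ (4 * m) - 15 * α ^ (2 * m) + 6) /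
            (α ^ (7 * m) * (α ^ (2 * m) - 1) ^ 3) := by
    intro m hm
    have hy0 : α ^ m ≠ 0 := pow_ne_zero _ hα0
    have hy2 : 2 ≤ (α ^ m) ^ 2 := hαm m hm
    have hy1 : (α ^ m) ^ 2 - 1 ≠ 0 := by nlinarith
    rw [epow 3 m, epow 2 m, epow 4 m, epow 7 m, dpow 3 m, dpow 5 m, dpow 7 m]
    exact hkey0 (α ^ m) hy0 hy1
  -- geometric facts
  have hrlt : ∀ j : ℕ, 1 ≤ j → (1 / α ^ j) < 1 := by
    intro j hj
    rw [div_lt_one (by positivity)]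
    exact one_lt_pow₀ hα1 (by omega)
  have hgsum : ∀ j : ℕ, 1 ≤ j → Summable (fun k : ℕ => (1 / α ^ j) ^ (n + k)) := by
    intro j hj
    have := (summable_geometric_of_lt_one (by positivity) (hrlt j hj)).mul_left ((1 / α ^ j) ^ n)
    simpa [pow_add] using this
  have hgval : ∀ j : ℕ, 1 ≤ j →
      ∑' k : ℕ, (1 / α ^ j) ^ (n + k) = (1 / α ^ j) ^ n * (1 - 1 / α ^ j)⁻¹ := by
    intro j hj
    simp only [pow_add]
    rw [tsum_mul_left, tsum_geometric_of_lt_one (by positivity) (hrlt j hj)]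
  -- summability of the main term
  have hmain_nonneg : ∀ k : ℕ, 0 ≤ α ^ (3 * (n + k)) / (α ^ (2 * (n + k)) - 1) ^ 3 := by
    intro k
    have hy2 : 2 ≤ (α ^ (n + k)) ^ 2 := hαm (n + k) (by omega)
    rw [epow 3 (n + k), epow 2 (n + k)]
    apply div_nonneg (by positivity)
    have := pow_pos (show (0:ℝ) < (α ^ (n + k)) ^ 2 - 1 by nlinarith) 3
    linarith
  have hmain_bd : ∀ k : ℕ,
      α ^ (3 * (n + k)) / (α ^ (2 * (n + k)) - 1) ^ 3 ≤ 8 * (1 / α ^ 3) ^ (n + k) := by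
    intro k
    have hy0 : (0:ℝ) < α ^ (n + k) := by positivity
    have hy2 : 2 ≤ (α ^ (n + k)) ^ 2 := hαm (n + k) (by omega)
    rw [epow 3 (n + k), epow 2 (n + k), dpow 3 (n + k)]
    rw [div_le_iff₀ (pow_pos (show (0:ℝ) < (α ^ (n + k)) ^ 2 - 1 by nlinarith) 3)]
    have h8 : 8 * (1 / (α ^ (n + k)) ^ 3) = 8 / (α ^ (n + k)) ^ 3 := by ring
    rw [h8, div_mul_eq_mul_div, le_div_iff₀ (by positivity)]
    nlinarith [sq_nonneg ((α ^ (n + k)) ^ 2 - 2), sq_nonneg (α ^ (n + k)), hy0.le]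
  have hsum_main : Summable (fun k : ℕ => α ^ (3 * (n + k)) / (α ^ (2 * (n + k)) - 1) ^ 3) :=
    Summable.of_nonneg_of_le hmain_nonneg hmain_bd ((hgsum 3 (by omega)).mul_left 8)
  -- summability of f
  have hsumf : Summable (fun k : ℕ =>
      (10 * α ^ (4 * (n + k)) - 15 * α ^ (2 * (n + k)) + 6) /
        (α ^ (7 * (n + k)) * (α ^ (2 * (n + k)) - 1) ^ 3)) := by
    have heq : (fun k : ℕ =>
        (10 * α ^ (4 * (n + k)) - 15 * α ^ (2 * (n + k)) + 6) /
          (α ^ (7 * (n + k)) * (α ^ (2 * (n + k)) - 1) ^ 3)) =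
        fun k : ℕ => α ^ (3 * (n + k)) / (α ^ (2 * (n + k)) - 1) ^ 3 -
          ((1 / α ^ 3) ^ (n + k) + 3 * (1 / α ^ 5) ^ (n + k) + 6 * (1 / α ^ 7) ^ (n + k)) := by
      funext k
      have := hkey (n + k) (by omega)
      linarith
    rw [heq]
    exact hsum_main.sub (((hgsum 3 (by omega)).add ((hgsum 5 (by omega)).mul_left 3)).add
      ((hgsum 7 (by omega)).mul_left 6))
  -- pointwise value of 1/G^3
  have hGval : ∀ k : ℕ, 1 / (G (n + k)) ^ 3 =
      (α - β) ^ 3 * (α ^ (3 * (n + k)) / (α ^ (2 * (n + k)) - 1) ^ 3) := by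
    intro k
    have hy0 : α ^ (n + k) ≠ 0 := pow_ne_zero _ hα0
    have hy2 : 2 ≤ (α ^ (n + k)) ^ 2 := hαm (n + k) (by omega)
    have hy1 : (α ^ (n + k)) ^ 2 - 1 ≠ 0 := by nlinarith
    have hyp : (0:ℝ) < α ^ (n + k) := by positivity
    have hd1 : α - 1 / α ≠ 0 := by
      have h1 : 1 / α < 1 := by rw [div_lt_one (by linarith)]; exact hα1
      have : 0 < α - 1 / α := by linarith
      linarith
    have hd2 : α ^ (n + k) - 1 / α ^ (n + k) ≠ 0 := by
      have h1 : 1 / α ^ (n + k) < α ^ (n + k) := by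
        rw [div_lt_iff₀ hyp]; nlinarith
      have : 0 < α ^ (n + k) - 1 / α ^ (n + k) := by linarith
      linarith
    rw [hG, hβα, epow 3 (n + k), epow 2 (n + k),
      show ((1:ℝ) / α) ^ (n + k) = 1 / α ^ (n + k) from by rw [div_pow, one_pow]]
    rw [div_pow, one_div_div]
    generalize hgen : α ^ (n + k) = y at hy0 hy1 hyp hd2 ⊢
    have hstep : y - 1 / y = (y ^ 2 - 1) / y := by
      field_simp
    rw [hstep, div_pow, div_div_eq_mul_div, mul_div_assoc]
  -- compute the left-hand sum
  have hL : ∑' k : ℕ, 1 / (G (n + k)) ^ 3 =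
      (α - β) ^ 3 * ((1 / α ^ 3) ^ n * (1 - 1 / α ^ 3)⁻¹ +
        3 * ((1 / α ^ 5) ^ n * (1 - 1 / α ^ 5)⁻¹) +
        6 * ((1 / α ^ 7) ^ n * (1 - 1 / α ^ 7)⁻¹) +
        ∑' k : ℕ, (10 * α ^ (4 * (n + k)) - 15 * α ^ (2 * (n + k)) + 6) /
          (α ^ (7 * (n + k)) * (α ^ (2 * (n + k)) - 1) ^ 3)) := by
    rw [tsum_congr hGval, tsum_mul_left]
    congr 1
    rw [tsum_congr (fun k => hkey (n + k) (by omega)),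
      Summable.tsum_add (((hgsum 3 (by omega)).add ((hgsum 5 (by omega)).mul_left 3)).add
        ((hgsum 7 (by omega)).mul_left 6)) hsumf,
      Summable.tsum_add ((hgsum 3 (by omega)).add ((hgsum 5 (by omega)).mul_left 3))
        ((hgsum 7 (by omega)).mul_left 6),
      Summable.tsum_add (hgsum 3 (by omega)) ((hgsum 5 (by omega)).mul_left 3),
      tsum_mul_left, tsum_mul_left, hgval 3 (by omega), hgval 5 (by omega), hgval 7 (by omega)]
  rw [hL]
  -- final algebraic computation
  have h3 : (1:ℝ) < α ^ 3 := one_lt_pow₀ hα1 (by omega)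
  have h5 : (1:ℝ) < α ^ 5 := one_lt_pow₀ hα1 (by omega)
  have h7 : (1:ℝ) < α ^ 7 := one_lt_pow₀ hα1 (by omega)
  have h3' : α ^ 3 - 1 ≠ 0 := by linarith
  have h5' : α ^ 5 - 1 ≠ 0 := by linarith
  have h7' : α ^ 7 - 1 ≠ 0 := by linarith
  have g3 : (1 - 1 / α ^ 3) ≠ 0 := by
    have := hrlt 3 (by omega); linarith
  have g5 : (1 - 1 / α ^ 5) ≠ 0 := by
    have := hrlt 5 (by omega); linarith
  have g7 : (1 - 1 / α ^ 7) ≠ 0 := by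
    have := hrlt 7 (by omega); linarith
  have e3n : α ^ (3 * n) ≠ 0 := pow_ne_zero _ hα0
  have e2n : α ^ (2 * n) ≠ 0 := pow_ne_zero _ hα0
  have e4n : α ^ (4 * n) ≠ 0 := pow_ne_zero _ hα0
  have d3 : (1 / α ^ 3) ^ n = 1 / α ^ (3 * n) := by
    rw [div_pow, one_pow, ← pow_mul]
  have d5 : (1 / α ^ 5) ^ n = 1 / (α ^ (2 * n) * α ^ (3 * n)) := by
    rw [div_pow, one_pow, ← pow_mul, ← pow_add]
    congr 2
    ring
  have d7 : (1 / α ^ 7) ^ n = 1 / (α ^ (4 * n) * α ^ (3 * n)) := by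
    rw [div_pow, one_pow, ← pow_mul, ← pow_add]
    congr 2
    ring
  rw [d3, d5, d7]
  field_simp
end

section
/- Let a ≥ 3 be an integer, α = (a + √(a²−4))/2, and for n ≥ 2 set R_n = ((α³−1)·α^{3n}/α³)·∑_{k=n}^∞ (10α^{4k} − 15α^{2k} + 6)/(α^{7k}(α^{2k}−1)³). Then for every n ≥ 2, 10α⁶/(α^{6n}(α⁶+α³+1)) < R_n < 11α⁶/(α^{6n}(α⁶+α³+1)). -/
set_option maxHeartbeats 1000000 in
theorem stmt_4 (a : ℤ) (ha : 3 ≤ a) (α : ℝ)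
    (hα : α = ((a : ℝ) + Real.sqrt ((a : ℝ) ^ 2 - 4)) / 2) :
    ∀ n : ℕ, 2 ≤ n →
      10 * α ^ 6 / (α ^ (6 * n) * (α ^ 6 + α ^ 3 + 1)) <
        (α ^ 3 - 1) * α ^ (3 * n) / α ^ 3 *
          ∑' k : ℕ,
            (10 * α ^ (4 * (n + k)) - 15 * α ^ (2 * (n + k)) + 6) /
              (α ^ (7 * (n + k)) * (α ^ (2 * (n + k)) - 1) ^ 3) ∧
      (α ^ 3 - 1) * α ^ (3 * n) / α ^ 3 *
          ∑' k : ℕ,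
            (10 * α ^ (4 * (n + k)) - 15 * α ^ (2 * (n + k)) + 6) /
              (α ^ (7 * (n + k)) * (α ^ (2 * (n + k)) - 1) ^ 3) <
        11 * α ^ 6 / (α ^ (6 * n) * (α ^ 6 + α ^ 3 + 1)) := by
  have ha' : (3:ℝ) ≤ (a:ℝ) := by exact_mod_cast ha
  have h5 : (5:ℝ) ≤ (a:ℝ)^2 - 4 := by nlinarith
  have hs : (2:ℝ) < Real.sqrt ((a:ℝ)^2 - 4) := by
    have h4 : Real.sqrt 4 = 2 := by
      rw [show (4:ℝ) = 2^2 by norm_num, Real.sqrt_sq (by norm_num : (0:ℝ) ≤ 2)]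
    calc (2:ℝ) = Real.sqrt 4 := h4.symm
      _ < Real.sqrt ((a:ℝ)^2-4) := Real.sqrt_lt_sqrt (by norm_num) (by linarith)
  have hα5 : (5/2 : ℝ) < α := by rw [hα]; linarith
  have hα1 : (1:ℝ) < α := by linarith
  have hα0 : (0:ℝ) < α := by linarith
  have key : ∀ m : ℕ, 2 ≤ m →
      10 * ((α^9)⁻¹)^m <
        (10*α^(4*m) - 15*α^(2*m) + 6)/(α^(7*m)*(α^(2*m)-1)^3) ∧
      (10*α^(4*m) - 15*α^(2*m) + 6)/(α^(7*m)*(α^(2*m)-1)^3) < 11 * ((α^9)⁻¹)^m := by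
    intro m hm
    have hy2 : α^2 ≤ α^m := pow_le_pow_right₀ hα1.le hm
    set y := α ^ m with hy
    have hy6 : (25/4 : ℝ) < y := by nlinarith
    have hy0 : (0:ℝ) < y := by linarith
    have h4m : α^(4*m) = y^4 := by rw [mul_comm, pow_mul]
    have h2m : α^(2*m) = y^2 := by rw [mul_comm, pow_mul]
    have h7m : α^(7*m) = y^7 := by rw [mul_comm, pow_mul]
    have h9m : ((α^9)⁻¹)^m = (y^9)⁻¹ := by
      rw [inv_pow, ← pow_mul, mul_comm, pow_mul]
    rw [h4m, h2m, h7m, h9m]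
    have hy21 : (0:ℝ) < y^2 - 1 := by nlinarith
    have hden : (0:ℝ) < y^7 * (y^2-1)^3 := mul_pos (pow_pos hy0 7) (pow_pos hy21 3)
    have hy9 : (0:ℝ) < y^9 := pow_pos hy0 9
    constructor
    · rw [← div_eq_mul_inv, div_lt_div_iff₀ hy9 hden]
      have h1 : (0:ℝ) < 15*y^4 - 24*y^2 + 10 := by nlinarith [sq_nonneg (y^2 - 1)]
      nlinarith [mul_pos (pow_pos hy0 7) h1]
    · rw [← div_eq_mul_inv, div_lt_div_iff₀ hden hy9]
      have hu : (39:ℝ) < y^2 := by nlinarith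
      have h2 : (0:ℝ) < y^6 - 18*y^4 + 27*y^2 - 11 := by
        nlinarith [mul_pos (pow_pos hy0 4) (show (0:ℝ) < y^2 - 39 by linarith),
          pow_pos hy0 4, pow_pos hy0 2, sq_nonneg (y^2 - 39)]
      nlinarith [mul_pos (pow_pos hy0 7) h2]
  intro n hn
  set r : ℝ := (α^9)⁻¹ with hr
  have hα9 : (1:ℝ) < α^9 := one_lt_pow₀ hα1 (by norm_num)
  have hr0 : (0:ℝ) < r := by rw [hr]; positivity
  have hr1 : r < 1 := by rw [hr]; exact inv_lt_one_of_one_lt₀ hα9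
  set f : ℕ → ℝ := fun k =>
    (10*α^(4*(n+k)) - 15*α^(2*(n+k)) + 6)/(α^(7*(n+k))*(α^(2*(n+k))-1)^3) with hf
  have hkey : ∀ k : ℕ, 10 * r^(n+k) < f k ∧ f k < 11 * r^(n+k) := by
    intro k
    have := key (n+k) (hn.trans (Nat.le_add_right n k))
    simpa [hf, hr, inv_pow] using this
  have hg : Summable (fun k : ℕ => r^(n+k)) := by
    have : Summable (fun k : ℕ => r^n * r^k) :=
      (summable_geometric_of_lt_one hr0.le hr1).mul_left (r^n)
    simpa [pow_add] using this
  have hF : Summable f := by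
    apply Summable.of_nonneg_of_le
      (fun k => le_of_lt (lt_trans (by positivity) (hkey k).1))
      (fun k => (hkey k).2.le)
    exact hg.mul_left 11
  have hT : ∑' k : ℕ, r^(n+k) = r^n * (1 - r)⁻¹ := by
    simp [pow_add, tsum_mul_left, tsum_geometric_of_lt_one hr0.le hr1]
  have hC0 : (0:ℝ) < (α^3-1) * α^(3*n) / α^3 := by
    have h31 : (0:ℝ) < α^3 - 1 := by nlinarith [pow_pos hα0 2, sq_nonneg (α - 1)]
    exact div_pos (mul_pos h31 (pow_pos hα0 _)) (pow_pos hα0 3)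
  have hlow : (10:ℝ) * ∑' k, r^(n+k) < ∑' k, f k := by
    calc (10:ℝ) * ∑' k, r^(n+k) = ∑' k, 10 * r^(n+k) := tsum_mul_left.symm
      _ < ∑' k, f k :=
        Summable.tsum_lt_tsum (fun k => (hkey k).1.le) (hkey 0).1 (hg.mul_left 10) hF
  have hhigh : ∑' k, f k < (11:ℝ) * ∑' k, r^(n+k) := by
    calc ∑' k, f k < ∑' k, 11 * r^(n+k) :=
        Summable.tsum_lt_tsum (fun k => (hkey k).2.le) (hkey 0).2 hF (hg.mul_left 11)
      _ = (11:ℝ) * ∑' k, r^(n+k) := tsum_mul_left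
  -- closed form of the geometric part
  set z := α ^ n with hz
  have hz0 : (0:ℝ) < z := pow_pos hα0 n
  have h3n : α^(3*n) = z^3 := by rw [mul_comm, pow_mul]
  have h6n : α^(6*n) = z^6 := by rw [mul_comm, pow_mul]
  have hrn : r^n = (z^9)⁻¹ := by rw [hr, inv_pow, ← pow_mul, mul_comm, pow_mul]
  have h1r : (1:ℝ) - r ≠ 0 := by linarith
  have hαne : α ≠ 0 := ne_of_gt hα0
  have hzne : z ≠ 0 := ne_of_gt hz0
  have hP : (0:ℝ) < α^6 + α^3 + 1 := by positivity
  clear_value z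
  have heq : (α^3-1) * α^(3*n) / α^3 * (r^n * (1 - r)⁻¹)
      = α^6 / (α^(6*n) * (α^6 + α^3 + 1)) := by
    rw [h3n, h6n, hrn, hr]
    have hα9ne : (α:ℝ)^9 ≠ 0 := by positivity
    have h91 : α^9 - 1 ≠ 0 := by nlinarith
    have hone : (1:ℝ) - (α^9)⁻¹ = (α^9-1)/α^9 := by field_simp
    rw [hone]
    field_simp
    ring
  constructor
  · calc 10 * α^6 / (α^(6*n) * (α^6 + α^3 + 1))
        = (α^3-1) * α^(3*n) / α^3 * (10 * ∑' k, r^(n+k)) := by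
          rw [hT, show (α^3-1) * α^(3*n) / α^3 * (10 * (r^n * (1-r)⁻¹))
              = 10 * ((α^3-1) * α^(3*n) / α^3 * (r^n * (1-r)⁻¹)) by ring, heq,
            mul_div_assoc]
      _ < (α^3-1) * α^(3*n) / α^3 * ∑' k, f k :=
          mul_lt_mul_of_pos_left hlow hC0
  · calc (α^3-1) * α^(3*n) / α^3 * ∑' k, f k
        < (α^3-1) * α^(3*n) / α^3 * (11 * ∑' k, r^(n+k)) :=
          mul_lt_mul_of_pos_left hhigh hC0
      _ = 11 * α^6 / (α^(6*n) * (α^6 + α^3 + 1)) := by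
          rw [hT, show (α^3-1) * α^(3*n) / α^3 * (11 * (r^n * (1-r)⁻¹))
              = 11 * ((α^3-1) * α^(3*n) / α^3 * (r^n * (1-r)⁻¹)) by ring, heq,
            mul_div_assoc]
end

section
/- Let a ≥ 3 be an integer, α = (a + √(a²−4))/2, β = (a − √(a²−4))/2, and for n ≥ 2 let λ₁ = 3(α−1)/((α−β)³·αⁿ) + 4/α^{n+3}. Then for all n ≥ 2, both 3(α² + α³)/((α−β)(α⁵−1)) > λ₁ and 3(α + α⁴)/((α−β)(α⁵−1)) > λ₁. -/
lemma aux_key (x s : ℝ) (hx : 5/2 ≤ x) (hs : s * x = x^2 - 1) (hsp : 0 < s) :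
    3*(x-1)/(s^3*x^2) + 4/x^5 < 3*(x^2+x^3)/(s*(x^5-1)) ∧
    3*(x-1)/(s^3*x^2) + 4/x^5 < 3*(x+x^4)/(s*(x^5-1)) := by
  have hx0 : (0:ℝ) < x := by linarith
  have hx1 : (1:ℝ) < x := by linarith
  have hxne : x ≠ 0 := ne_of_gt hx0
  have h21 : (0:ℝ) < x^2 - 1 := by nlinarith
  have hd1 : (0:ℝ) < x^5 - 1 := by nlinarith [pow_pos hx0 2, pow_pos hx0 3]
  have h21ne : x^2 - 1 ≠ 0 := ne_of_gt h21
  have hd1ne : x^5 - 1 ≠ 0 := ne_of_gt hd1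
  have hsval : s = (x^2-1)/x := by field_simp; linarith [hs]
  have hy : (0:ℝ) ≤ x - 5/2 := by linarith
  have hD : (0:ℝ) < (x^2-1)^3*(x^5-1)*x^5 :=
    mul_pos (mul_pos (pow_pos h21 3) hd1) (pow_pos hx0 5)
  subst hsval
  constructor
  · rw [← sub_pos]
    have e : 3*(x^2+x^3)/(((x^2-1)/x)*(x^5-1)) - (3*(x-1)/(((x^2-1)/x)^3*x^2) + 4/x^5) =
        (3*(x^2+x^3)*(x^2-1)^2*x^6 - 3*(x-1)*x^6*(x^5-1) - 4*(x^2-1)^3*(x^5-1)) /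
          ((x^2-1)^3*(x^5-1)*x^5) := by
      field_simp
      ring
    rw [e]
    apply div_pos _ hD
    nlinarith [hy, pow_nonneg hy 2, pow_nonneg hy 3, pow_nonneg hy 4, pow_nonneg hy 5,
      pow_nonneg hy 6, pow_nonneg hy 7, pow_nonneg hy 8, pow_nonneg hy 9, pow_nonneg hy 10,
      pow_nonneg hy 11, pow_nonneg hy 12, pow_nonneg hy 13]
  · rw [← sub_pos]
    have e : 3*(x+x^4)/(((x^2-1)/x)*(x^5-1)) - (3*(x-1)/(((x^2-1)/x)^3*x^2) + 4/x^5) =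
        (3*(x+x^4)*(x^2-1)^2*x^6 - 3*(x-1)*x^6*(x^5-1) - 4*(x^2-1)^3*(x^5-1)) /
          ((x^2-1)^3*(x^5-1)*x^5) := by
      field_simp
      ring
    rw [e]
    apply div_pos _ hD
    nlinarith [hy, pow_nonneg hy 2, pow_nonneg hy 3, pow_nonneg hy 4, pow_nonneg hy 5,
      pow_nonneg hy 6, pow_nonneg hy 7, pow_nonneg hy 8, pow_nonneg hy 9, pow_nonneg hy 10,
      pow_nonneg hy 11, pow_nonneg hy 12, pow_nonneg hy 13, pow_nonneg hy 14]

theorem stmt_18 (a : ℤ) (ha : 3 ≤ a) (α β : ℝ)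
    (hα : α = ((a : ℝ) + Real.sqrt ((a : ℝ) ^ 2 - 4)) / 2)
    (hβ : β = ((a : ℝ) - Real.sqrt ((a : ℝ) ^ 2 - 4)) / 2) :
    ∀ n : ℕ, 2 ≤ n →
      3 * (α ^ 2 + α ^ 3) / ((α - β) * (α ^ 5 - 1)) >
          3 * (α - 1) / ((α - β) ^ 3 * α ^ n) + 4 / α ^ (n + 3) ∧
        3 * (α + α ^ 4) / ((α - β) * (α ^ 5 - 1)) >
          3 * (α - 1) / ((α - β) ^ 3 * α ^ n) + 4 / α ^ (n + 3) := by
  intro n hn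
  have ha' : (3:ℝ) ≤ (a:ℝ) := by exact_mod_cast ha
  have h4 : (0:ℝ) ≤ (a:ℝ)^2 - 4 := by nlinarith
  set s := Real.sqrt ((a:ℝ)^2 - 4) with hsdef
  have hs2 : s^2 = (a:ℝ)^2 - 4 := Real.sq_sqrt h4
  have hs0 : 0 ≤ s := Real.sqrt_nonneg _
  have hsgt : 2 < s := by nlinarith
  have hαβ : α - β = s := by rw [hα, hβ]; ring
  have hαge : (5/2:ℝ) ≤ α := by rw [hα]; linarith
  have hprod : α * β = 1 := by
    rw [hα, hβ]; linear_combination (-1/4 : ℝ) * hs2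
  have hsα : s * α = α^2 - 1 := by linear_combination (-α) * hαβ - hprod
  have hspos : (0:ℝ) < s := by linarith
  have hα1 : (1:ℝ) < α := by linarith
  have hαn : α^2 ≤ α^n := pow_le_pow_right₀ (by linarith) hn
  have hα5 : α^5 ≤ α^(n+3) := pow_le_pow_right₀ (by linarith) (by omega)
  have hα0 : (0:ℝ) < α := by linarith
  rw [hαβ]
  have hm1 : 3*(α-1)/(s^3*α^n) ≤ 3*(α-1)/(s^3*α^2) := by
    gcongr
  have hm2 : 4/α^(n+3) ≤ 4/α^5 := by
    gcongr
  have hk := aux_key α s hαge hsα hspos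
  constructor
  · linarith [hk.1]
  · linarith [hk.2]
end
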